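/- Let C be a space whose rational cohomology algebra has no nonzero negative-degree derivations and is finite-dimensional, let T = (S^1)^s, and let f : T × C → C be a map whose restriction f(y_0, -) : C → C is homotopic to the identity. Then f^* : H^*(C;ℚ) → H^*(T × C;ℚ) ≅ H^*(T;ℚ) ⊗ H^*(C;ℚ) is given by f^*(u) = 1 ⊗ u for all u. -/

import Mathlib

structure GradedDerivation (R : Type*) [Ring R] [Algebra ℚ R]
    (𝒜 : ℤ → Submodule ℚ R) (d : ℤ) where
  toLin : R →ₗ[ℚ] R
  mem_of_mem : ∀ (n : ℤ) (u : R), u ∈ 𝒜 n → toLin u ∈ 𝒜 (n + d)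
  leibniz : ∀ (m n : ℤ) (u v : R), u ∈ 𝒜 m → v ∈ 𝒜 n →
    toLin (u * v) = toLin u * v + ((-1 : ℚ) ^ (d * m)) • (u * toLin v)

def IsGradedComm (R : Type*) [Ring R] [Algebra ℚ R] (𝒜 : ℤ → Submodule ℚ R) : Prop :=
  ∀ (m n : ℤ) (u v : R), u ∈ 𝒜 m → v ∈ 𝒜 n → u * v = ((-1 : ℚ) ^ (m * n)) • (v * u)

def NoNegativeDerivations (R : Type*) [Ring R] [Algebra ℚ R] (𝒜 : ℤ → Submodule ℚ R) : Prop :=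
  ∀ d : ℤ, d < 0 → ∀ D : GradedDerivation R 𝒜 d, D.toLin = 0
/-- The ordered product `ι_I = ι_{i₁} ⋯ ι_{i_k}` for `I = {i₁ < … < i_k}`. -/
def orderedProd {B : Type*} [Ring B] {s : ℕ} (ι : Fin s → B) (I : Finset (Fin s)) : B :=
  ((I.sort (· ≤ ·)).map ι).prod

set_option linter.unusedSectionVars false
set_option maxHeartbeats 1000000
open scoped Classical

section Helpers

lemma qhalf {M : Type*} [AddCommGroup M] [Module ℚ M] {a : M} (h : a + a = 0) : a = 0 := by
  have h2 : (2:ℚ) • a = 0 := by rw [two_smul]; exact h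
  have := smul_eq_zero.mp h2
  simpa using this.resolve_left (by norm_num)

lemma neg_one_zpow_congr {a b : ℤ} (h : Even (a - b)) : (-1:ℚ)^a = (-1:ℚ)^b := by
  obtain ⟨t, ht⟩ := h
  have ha : a = b + 2*t := by omega
  rw [ha, zpow_add₀ (by norm_num : (-1:ℚ) ≠ 0), zpow_mul]
  norm_num

lemma neg_one_zpow_sq (a : ℤ) : ((-1:ℚ)^a) * ((-1:ℚ)^a) = 1 := by
  rw [← zpow_add₀ (by norm_num : (-1:ℚ) ≠ 0)]
  have : (-1:ℚ)^(a+a) = (-1:ℚ)^(0:ℤ) := neg_one_zpow_congr (by exact ⟨a, by ring⟩)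
  simpa using this

end Helpers

section Comb

variable {B : Type*} [Ring B] [Algebra ℚ B] (ℬ : ℤ → Submodule ℚ B) [GradedRing ℬ]
variable {s : ℕ}

lemma deg1_anticomm (hcB : IsGradedComm B ℬ) {a b : B} (ha : a ∈ ℬ 1) (hb : b ∈ ℬ 1) :
    a * b = -(b * a) := by
  have h := hcB 1 1 a b ha hb
  rw [h]
  have : ((-1:ℚ) ^ (1*1 : ℤ)) = -1 := by norm_num
  rw [this, neg_one_smul]

lemma deg1_sq (hcB : IsGradedComm B ℬ) {a : B} (ha : a ∈ ℬ 1) : a * a = 0 := by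
  have h := deg1_anticomm ℬ hcB ha ha
  exact qhalf (by nth_rewrite 1 [h]; abel)

variable (x : Fin s → B)

lemma LP_mem (hx : ∀ i, x i ∈ ℬ 1) : ∀ l : List (Fin s), (l.map x).prod ∈ ℬ (l.length) := by
  intro l
  induction l with
  | nil => simpa using SetLike.one_mem_graded ℬ
  | cons a l ih =>
      have := SetLike.mul_mem_graded (hx a) ih
      simp only [List.map_cons, List.prod_cons, List.length_cons]
      convert this using 2
      push_cast
      ring

lemma orderedProd_mem (hx : ∀ i, x i ∈ ℬ 1) (I : Finset (Fin s)) :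
    orderedProd x I ∈ ℬ (I.card) := by
  have := LP_mem ℬ x hx (I.sort (· ≤ ·))
  rwa [Finset.length_sort] at this

lemma comm_LP (hcB : IsGradedComm B ℬ) (hx : ∀ i, x i ∈ ℬ 1) (y : B) (hy : y ∈ ℬ 1) :
    ∀ l : List (Fin s), y * (l.map x).prod = ((-1:ℚ)^(l.length)) • ((l.map x).prod * y) := by
  intro l
  induction l with
  | nil => simp
  | cons a l ih =>
      simp only [List.map_cons, List.prod_cons, List.length_cons]
      rw [← mul_assoc, deg1_anticomm ℬ hcB hy (hx a), neg_mul, mul_assoc, ih,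
        mul_smul_comm, ← mul_assoc, pow_succ, ← neg_smul]
      congr 1
      ring

lemma orderedProd_empty : orderedProd x (∅ : Finset (Fin s)) = 1 := by
  simp [orderedProd]

lemma orderedProd_singleton (a : Fin s) : orderedProd x {a} = x a := by
  simp [orderedProd]

lemma mul_orderedProd_of_mem (hcB : IsGradedComm B ℬ) (hx : ∀ i, x i ∈ ℬ 1) {a : Fin s}
    {S : Finset (Fin s)} (h : a ∈ S) : x a * orderedProd x S = 0 := by
  have haS : a ∈ S.sort (· ≤ ·) := (Finset.mem_sort _).mpr h
  obtain ⟨l₁, l₂, hsplit⟩ := List.append_of_mem haS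
  rw [orderedProd, hsplit]
  simp only [List.map_append, List.prod_append, List.map_cons, List.prod_cons]
  rw [← mul_assoc, comm_LP ℬ x hcB hx _ (hx a) l₁, smul_mul_assoc,
    mul_assoc ((List.map x l₁).prod), ← mul_assoc (x a) (x a), deg1_sq ℬ hcB (hx a)]
  simp

lemma sort_insert_split {a : Fin s} {S : Finset (Fin s)} (h : a ∉ S) :
    ∃ l₁ l₂, (insert a S).sort (· ≤ ·) = l₁ ++ a :: l₂ ∧
      l₁ ++ l₂ = S.sort (· ≤ ·) := by
  have ha : a ∈ (insert a S).sort (· ≤ ·) := (Finset.mem_sort _).mpr (Finset.mem_insert_self a S)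
  obtain ⟨l₁, l₂, hsplit⟩ := List.append_of_mem ha
  refine ⟨l₁, l₂, hsplit, ?_⟩
  have hsorted : (l₁ ++ l₂).Pairwise (· ≤ ·) := by
    have hsub : (l₁ ++ l₂).Sublist (l₁ ++ a :: l₂) :=
      (List.sublist_cons_self a l₂).append_left l₁
    have hs := Finset.pairwise_sort (insert a S) (· ≤ ·)
    rw [hsplit] at hs
    exact hs.sublist hsub
  have hperm : (l₁ ++ l₂).Perm (S.sort (· ≤ ·)) := by
    have h2 : ((l₁ ++ a :: l₂ : List (Fin s)) : Multiset (Fin s))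
        = ((a :: S.sort (· ≤ ·) : List (Fin s)) : Multiset (Fin s)) := by
      rw [← hsplit]
      show ((insert a S).sort (· ≤ ·) : Multiset (Fin s)) = _
      rw [Finset.sort_eq, Finset.insert_val, Multiset.ndinsert_of_notMem h,
        ← Multiset.cons_coe, Finset.sort_eq]
    have h2' : (l₁ ++ a :: l₂).Perm (a :: S.sort (· ≤ ·)) := Multiset.coe_eq_coe.mp h2
    have h1 : (l₁ ++ a :: l₂).Perm (a :: (l₁ ++ l₂)) := List.perm_middle
    exact (h1.symm.trans h2').cons_inv
  exact List.Perm.eq_of_pairwise' hsorted (Finset.pairwise_sort _ _) hperm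

lemma mul_orderedProd_of_not_mem (hcB : IsGradedComm B ℬ) (hx : ∀ i, x i ∈ ℬ 1) {a : Fin s}
    {S : Finset (Fin s)} (h : a ∉ S) :
    ∃ c : ℚ, x a * orderedProd x S = c • orderedProd x (insert a S) := by
  obtain ⟨l₁, l₂, hs, hl⟩ := sort_insert_split h
  refine ⟨(-1:ℚ)^(l₁.length), ?_⟩
  rw [orderedProd, orderedProd, hs, ← hl]
  simp only [List.map_append, List.prod_append, List.map_cons, List.prod_cons]
  rw [← mul_assoc, comm_LP ℬ x hcB hx _ (hx a) l₁, smul_mul_assoc, mul_assoc]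

end Comb

section Comb2

variable {B : Type*} [Ring B] [Algebra ℚ B] (ℬ : ℤ → Submodule ℚ B) [GradedRing ℬ]
variable {s : ℕ} (x : Fin s → B)

lemma LP_master (hcB : IsGradedComm B ℬ) (hx : ∀ i, x i ∈ ℬ 1) :
    ∀ l : List (Fin s), (¬ l.Nodup → (l.map x).prod = 0) ∧
      ∃ c : ℚ, (l.map x).prod = c • orderedProd x l.toFinset := by
  intro l
  induction l with
  | nil => exact ⟨fun h => absurd List.nodup_nil h, 1, by simp [orderedProd_empty]⟩
  | cons a l ih =>
      obtain ⟨ihnd, c, hc⟩ := ih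
      constructor
      · intro hnd
        rw [List.nodup_cons] at hnd
        push_neg at hnd
        simp only [List.map_cons, List.prod_cons]
        by_cases ha : a ∈ l
        · rw [hc, mul_smul_comm,
            mul_orderedProd_of_mem ℬ x hcB hx (List.mem_toFinset.mpr ha), smul_zero]
        · rw [ihnd (hnd ha), mul_zero]
      · simp only [List.map_cons, List.prod_cons, List.toFinset_cons]
        by_cases ha : a ∈ l.toFinset
        · refine ⟨0, ?_⟩
          rw [hc, mul_smul_comm, mul_orderedProd_of_mem ℬ x hcB hx ha, smul_zero, zero_smul]
        · obtain ⟨c', hc'⟩ := mul_orderedProd_of_not_mem ℬ x hcB hx ha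
          exact ⟨c * c', by rw [hc, mul_smul_comm, hc', smul_smul]⟩

lemma orderedProd_mul (hcB : IsGradedComm B ℬ) (hx : ∀ i, x i ∈ ℬ 1) (I J : Finset (Fin s)) :
    ∃ c : ℚ, orderedProd x I * orderedProd x J = c • orderedProd x (I ∪ J) ∧
      (¬ Disjoint I J → c = 0) ∧ (I = ∅ → c = 1) ∧ (J = ∅ → c = 1) := by
  by_cases hI : I = ∅
  · refine ⟨1, ?_, ?_, fun _ => rfl, fun _ => rfl⟩
    · subst hI; simp [orderedProd_empty]
    · intro hd; exact absurd (Finset.disjoint_left.mpr (by subst hI; simp)) hd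
  · by_cases hJ : J = ∅
    · refine ⟨1, ?_, ?_, fun h => absurd h hI, fun _ => rfl⟩
      · subst hJ; simp [orderedProd_empty]
      · intro hd; exact absurd (Finset.disjoint_right.mpr (by subst hJ; simp)) hd
    · have key : orderedProd x I * orderedProd x J
          = ((I.sort (· ≤ ·) ++ J.sort (· ≤ ·)).map x).prod := by
        rw [List.map_append, List.prod_append]; rfl
      have htf : (I.sort (· ≤ ·) ++ J.sort (· ≤ ·)).toFinset = I ∪ J := by
        rw [List.toFinset_append, Finset.sort_toFinset, Finset.sort_toFinset]
      by_cases hd : Disjoint I J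
      · obtain ⟨c, hc⟩ := (LP_master ℬ x hcB hx (I.sort (· ≤ ·) ++ J.sort (· ≤ ·))).2
        refine ⟨c, ?_, fun h => absurd hd h, fun h => absurd h hI, fun h => absurd h hJ⟩
        rw [key, hc, htf]
      · refine ⟨0, ?_, fun _ => rfl, fun h => absurd h hI, fun h => absurd h hJ⟩
        rw [key, zero_smul]
        refine (LP_master ℬ x hcB hx _).1 (fun hnd => ?_)
        rw [List.nodup_append] at hnd
        obtain ⟨b, hbI, hbJ⟩ := Finset.not_disjoint_iff.mp hd
        exact hnd.2.2 b ((Finset.mem_sort _).mpr hbI) b ((Finset.mem_sort _).mpr hbJ) rfl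

end Comb2

section GradedProj

variable {A : Type*} [Ring A] [Algebra ℚ A] (𝒜 : ℤ → Submodule ℚ A) [GradedRing 𝒜]

noncomputable def gproj (n : ℤ) : A →ₗ[ℚ] A :=
  (𝒜 n).subtype ∘ₗ (DFinsupp.lapply n) ∘ₗ (DirectSum.decomposeLinearEquiv 𝒜).toLinearMap

lemma gproj_apply (n : ℤ) (a : A) : gproj 𝒜 n a = ↑(DirectSum.decompose 𝒜 a n) := by
  rfl

lemma gproj_mem (n : ℤ) (a : A) : gproj 𝒜 n a ∈ 𝒜 n := by
  rw [gproj_apply]; exact SetLike.coe_mem _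

lemma gproj_of_mem_same {n : ℤ} {a : A} (h : a ∈ 𝒜 n) : gproj 𝒜 n a = a := by
  rw [gproj_apply]; exact DirectSum.decompose_of_mem_same 𝒜 h

lemma gproj_of_mem_ne {n m : ℤ} {a : A} (h : a ∈ 𝒜 n) (hnm : n ≠ m) : gproj 𝒜 m a = 0 := by
  rw [gproj_apply]; exact DirectSum.decompose_of_mem_ne 𝒜 h hnm

lemma gproj_sum_support (a : A) :
    ∑ n ∈ DFinsupp.support (DirectSum.decompose 𝒜 a), gproj 𝒜 n a = a := by
  conv_rhs => rw [← DirectSum.sum_support_decompose 𝒜 a]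
  exact Finset.sum_congr rfl fun n _ => gproj_apply 𝒜 n a

lemma gproj_not_support {a : A} {n : ℤ}
    (h : n ∉ DFinsupp.support (DirectSum.decompose 𝒜 a)) : gproj 𝒜 n a = 0 := by
  rw [gproj_apply, DFinsupp.notMem_support_iff.mp h, Submodule.coe_zero]

lemma gproj_mul_left {p : ℤ} {z : A} (hz : z ∈ 𝒜 p) (r : ℤ) (y : A) :
    gproj 𝒜 r (z * y) = z * gproj 𝒜 (r - p) y := by
  conv_lhs => rw [← gproj_sum_support 𝒜 y, Finset.mul_sum, map_sum]
  rw [Finset.sum_eq_single (r - p)]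
  · have hmem : z * gproj 𝒜 (r - p) y ∈ 𝒜 r := by
      have := SetLike.mul_mem_graded hz (gproj_mem 𝒜 (r - p) y)
      convert this using 2; ring
    exact gproj_of_mem_same 𝒜 hmem
  · intro q _ hq
    have hmem : z * gproj 𝒜 q y ∈ 𝒜 (p + q) :=
      SetLike.mul_mem_graded hz (gproj_mem 𝒜 q y)
    exact gproj_of_mem_ne 𝒜 hmem (by omega)
  · intro h
    rw [gproj_not_support 𝒜 h, mul_zero, map_zero]

lemma gproj_mul_right {q : ℤ} {y : A} (hy : y ∈ 𝒜 q) (r : ℤ) (z : A) :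
    gproj 𝒜 r (z * y) = gproj 𝒜 (r - q) z * y := by
  conv_lhs => rw [← gproj_sum_support 𝒜 z, Finset.sum_mul, map_sum]
  rw [Finset.sum_eq_single (r - q)]
  · have hmem : gproj 𝒜 (r - q) z * y ∈ 𝒜 r := by
      have := SetLike.mul_mem_graded (gproj_mem 𝒜 (r - q) z) hy
      convert this using 2; ring
    exact gproj_of_mem_same 𝒜 hmem
  · intro p _ hp
    have hmem : gproj 𝒜 p z * y ∈ 𝒜 (p + q) :=
      SetLike.mul_mem_graded (gproj_mem 𝒜 p z) hy
    exact gproj_of_mem_ne 𝒜 hmem (by omega)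
  · intro h
    rw [gproj_not_support 𝒜 h, zero_mul, map_zero]

end GradedProj

section FreeBasis

variable {A B : Type*} [Ring A] [Algebra ℚ A] [Ring B] [Algebra ℚ B]
variable {s : ℕ}

noncomputable def Lmap (j : A →ₐ[ℚ] B) (x : Fin s → B) : (Finset (Fin s) → A) →ₗ[ℚ] B where
  toFun c := ∑ I, orderedProd x I * j (c I)
  map_add' c d := by
    simp only [Pi.add_apply, map_add, mul_add]
    rw [Finset.sum_add_distrib]
  map_smul' q c := by
    simp only [Pi.smul_apply, map_smul, mul_smul_comm, RingHom.id_apply]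
    rw [Finset.smul_sum]

lemma Lmap_apply (j : A →ₐ[ℚ] B) (x : Fin s → B) (c : Finset (Fin s) → A) :
    Lmap j x c = ∑ I, orderedProd x I * j (c I) := rfl

def sing (I : Finset (Fin s)) (a : A) : Finset (Fin s) → A := fun K => if K = I then a else 0

lemma Lmap_sing (j : A →ₐ[ℚ] B) (x : Fin s → B) (I : Finset (Fin s)) (a : A) :
    Lmap j x (sing I a) = orderedProd x I * j a := by
  rw [Lmap_apply, Finset.sum_eq_single I]
  · simp [sing]
  · intro K _ hK
    simp [sing, hK]
  · intro h
    exact absurd (Finset.mem_univ I) h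

variable {j : A →ₐ[ℚ] B} {x : Fin s → B}

noncomputable def coeffn (hbij : Function.Bijective (Lmap j x)) :
    B →ₗ[ℚ] (Finset (Fin s) → A) :=
  (LinearEquiv.ofBijective (Lmap j x) hbij).symm.toLinearMap

lemma Lmap_coeffn (hbij : Function.Bijective (Lmap j x)) (b : B) :
    Lmap j x (coeffn hbij b) = b :=
  (LinearEquiv.ofBijective (Lmap j x) hbij).apply_symm_apply b

lemma coeffn_Lmap (hbij : Function.Bijective (Lmap j x)) (c : Finset (Fin s) → A) :
    coeffn hbij (Lmap j x c) = c :=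
  (LinearEquiv.ofBijective (Lmap j x) hbij).symm_apply_apply c

lemma coeffn_sing (hbij : Function.Bijective (Lmap j x)) (I : Finset (Fin s)) (a : A) :
    coeffn hbij (orderedProd x I * j a) = sing I a := by
  rw [← Lmap_sing j x I a, coeffn_Lmap]

variable (𝒜 : ℤ → Submodule ℚ A) (ℬ : ℤ → Submodule ℚ B) [GradedRing 𝒜] [GradedRing ℬ]

lemma pB_basis_term (hj : ∀ (n : ℤ) (a : A), a ∈ 𝒜 n → j a ∈ ℬ n)
    (hx : ∀ i, x i ∈ ℬ 1) (n : ℤ) (K : Finset (Fin s)) (a : A) :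
    gproj ℬ n (orderedProd x K * j a) = orderedProd x K * j (gproj 𝒜 (n - K.card) a) := by
  conv_lhs => rw [← gproj_sum_support 𝒜 a, map_sum, Finset.mul_sum, map_sum]
  rw [Finset.sum_eq_single ((n : ℤ) - K.card)]
  · have hmem : orderedProd x K * j (gproj 𝒜 (n - K.card) a) ∈ ℬ n := by
      have := SetLike.mul_mem_graded (orderedProd_mem ℬ x hx K)
        (hj _ _ (gproj_mem 𝒜 (n - K.card) a))
      convert this using 2; ring
    exact gproj_of_mem_same ℬ hmem
  · intro q _ hq
    have hmem : orderedProd x K * j (gproj 𝒜 q a) ∈ ℬ (K.card + q) :=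
      SetLike.mul_mem_graded (orderedProd_mem ℬ x hx K) (hj _ _ (gproj_mem 𝒜 q a))
    exact gproj_of_mem_ne ℬ hmem (by omega)
  · intro h
    rw [gproj_not_support 𝒜 h, map_zero, mul_zero, map_zero]

lemma coeffn_graded (hbij : Function.Bijective (Lmap j x))
    (hj : ∀ (n : ℤ) (a : A), a ∈ 𝒜 n → j a ∈ ℬ n)
    (hx : ∀ i, x i ∈ ℬ 1) {n : ℤ} {b : B} (hb : b ∈ ℬ n) (K : Finset (Fin s)) :
    coeffn hbij b K ∈ 𝒜 (n - K.card) := by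
  have h2 : gproj ℬ n (Lmap j x (coeffn hbij b))
      = Lmap j x (fun K => gproj 𝒜 (n - K.card) (coeffn hbij b K)) := by
    rw [Lmap_apply, map_sum, Lmap_apply]
    exact Finset.sum_congr rfl fun K _ => (pB_basis_term 𝒜 ℬ hj hx n K _)
  have key : Lmap j x (fun K => gproj 𝒜 (n - K.card) (coeffn hbij b K)) = b := by
    rw [← h2, Lmap_coeffn, gproj_of_mem_same ℬ hb]
  have h3 := coeffn_Lmap hbij (fun K => gproj 𝒜 (n - K.card) (coeffn hbij b K))
  rw [key] at h3
  have heval := congrFun h3 K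
  rw [heval]
  exact gproj_mem 𝒜 _ _

end FreeBasis

section Core

variable {A B : Type*} [Ring A] [Algebra ℚ A] [Ring B] [Algebra ℚ B]
variable {s : ℕ}
variable (𝒜 : ℤ → Submodule ℚ A) (ℬ : ℤ → Submodule ℚ B) [GradedRing 𝒜] [GradedRing ℬ]

/-- Elements of degree 0 are central. -/
lemma deg0_central (hcA : IsGradedComm A 𝒜) {a : A} (ha : a ∈ 𝒜 0) (b : A) :
    a * b = b * a := by
  conv_lhs => rw [← gproj_sum_support 𝒜 b, Finset.mul_sum]
  conv_rhs => rw [← gproj_sum_support 𝒜 b, Finset.sum_mul]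
  refine Finset.sum_congr rfl fun q _ => ?_
  have h := hcA q 0 (gproj 𝒜 q b) a (gproj_mem 𝒜 q b) ha
  rw [h, mul_zero, zpow_zero, one_smul]

/-- The Euler operator. -/
noncomputable def eulerLin : A →ₗ[ℚ] A :=
  (DirectSum.decomposeLinearEquiv 𝒜).symm.toLinearMap ∘ₗ
    (DFinsupp.mapRange.linearMap (fun n : ℤ => ((n:ℚ) • LinearMap.id : ↥(𝒜 n) →ₗ[ℚ] ↥(𝒜 n)))) ∘ₗ
    (DirectSum.decomposeLinearEquiv 𝒜).toLinearMap

lemma eulerLin_of_mem {n : ℤ} {u : A} (h : u ∈ 𝒜 n) : eulerLin 𝒜 u = (n:ℚ) • u := by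
  unfold eulerLin
  simp only [LinearMap.comp_apply, LinearEquiv.coe_toLinearMap, LinearEquiv.coe_coe]
  have h1 : (DirectSum.decomposeLinearEquiv 𝒜) u = DirectSum.of (fun i => ↥(𝒜 i)) n ⟨u,h⟩ := by
    rw [DirectSum.decomposeLinearEquiv_apply, DirectSum.decompose_of_mem 𝒜 h]
  erw [h1]
  have h2 : (DFinsupp.mapRange.linearMap (fun n : ℤ => ((n:ℚ) • LinearMap.id : ↥(𝒜 n) →ₗ[ℚ] ↥(𝒜 n))))
      (DirectSum.of (fun i => ↥(𝒜 i)) n ⟨u,h⟩)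
      = DirectSum.of (fun i => ↥(𝒜 i)) n (((n:ℚ) • LinearMap.id : ↥(𝒜 n) →ₗ[ℚ] ↥(𝒜 n)) ⟨u,h⟩) := by
    exact DFinsupp.mapRange_single (f := fun n x => ((n:ℚ) • LinearMap.id : ↥(𝒜 n) →ₗ[ℚ] ↥(𝒜 n)) x)
      (hf := fun i => by simp)
  erw [h2]
  rw [DirectSum.decomposeLinearEquiv_symm_apply, DirectSum.decompose_symm_of]
  simp

/-- Key consequence of having no negative derivations: any homogeneous element of
negative degree annihilates every homogeneous element of nonzero degree. -/
lemma neg_mul_eq_zero (hcA : IsGradedComm A 𝒜) (hno : NoNegativeDerivations A 𝒜)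
    {p : ℤ} (hp : p < 0) {z : A} (hz : z ∈ 𝒜 p)
    {n : ℤ} (hn : n ≠ 0) {u : A} (hu : u ∈ 𝒜 n) : z * u = 0 := by
  have hD : ∀ D : GradedDerivation A 𝒜 p, D.toLin = 0 := hno p hp
  set D : GradedDerivation A 𝒜 p :=
    { toLin := (LinearMap.mulLeft ℚ z) ∘ₗ eulerLin 𝒜
      mem_of_mem := by
        intro n u hu
        simp only [LinearMap.comp_apply, LinearMap.mulLeft_apply]
        rw [eulerLin_of_mem 𝒜 hu, mul_smul_comm]
        have : z * u ∈ 𝒜 (p + n) := SetLike.mul_mem_graded hz hu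
        exact Submodule.smul_mem _ _ (by rwa [add_comm] at this)
      leibniz := by
        intro m n u v hu hv
        simp only [LinearMap.comp_apply, LinearMap.mulLeft_apply]
        rw [eulerLin_of_mem 𝒜 (SetLike.mul_mem_graded hu hv), eulerLin_of_mem 𝒜 hu,
          eulerLin_of_mem 𝒜 hv]
        have hmove : u * (z * v) = ((-1:ℚ)^(m*p)) • (z * (u * v)) := by
          rw [← mul_assoc, hcA m p u z hu hz, smul_mul_assoc, mul_assoc]
        have e1 : z * ((m:ℚ)•u) * v = (m:ℚ) • (z*(u*v)) := by
          rw [mul_smul_comm, smul_mul_assoc, mul_assoc]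
        have e2 : u * (z * ((n:ℚ)•v)) = (n:ℚ) • (u * (z*v)) := by
          rw [mul_smul_comm, mul_smul_comm]
        rw [mul_smul_comm, e1, e2, hmove, smul_smul, smul_smul]
        have hsgn : (-1:ℚ)^(p*m) * (n:ℚ) * (-1:ℚ)^(m*p) = (n:ℚ) := by
          rw [show (m*p : ℤ) = p*m by ring, mul_comm ((-1:ℚ)^(p*m)) ((n:ℚ)), mul_assoc,
            neg_one_zpow_sq, mul_one]
        rw [hsgn, ← add_smul]
        congr 1
        push_cast
        ring } with hDdef
  have h0 := hD D
  have : D.toLin u = 0 := by rw [h0]; rfl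
  rw [hDdef] at this
  simp only [LinearMap.comp_apply, LinearMap.mulLeft_apply] at this
  rw [eulerLin_of_mem 𝒜 hu, mul_smul_comm] at this
  have := smul_eq_zero.mp this
  rcases this with h | h
  · exact absurd (by exact_mod_cast h) hn
  · exact h

lemma mul_neg_eq_zero (hcA : IsGradedComm A 𝒜) (hno : NoNegativeDerivations A 𝒜)
    {p : ℤ} (hp : p < 0) {z : A} (hz : z ∈ 𝒜 p)
    {n : ℤ} (hn : n ≠ 0) {u : A} (hu : u ∈ 𝒜 n) : u * z = 0 := by
  rw [hcA n p u z hu hz, neg_mul_eq_zero 𝒜 hcA hno hp hz hn hu, smul_zero]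

end Core

section Core2

variable {A B : Type*} [Ring A] [Algebra ℚ A] [Ring B] [Algebra ℚ B]
variable {s : ℕ}
variable (𝒜 : ℤ → Submodule ℚ A) (ℬ : ℤ → Submodule ℚ B) [GradedRing 𝒜] [GradedRing ℬ]
variable (x : Fin s → B) (j : A →ₐ[ℚ] B) (φ : A →ₐ[ℚ] B) (e : B →ₐ[ℚ] A)

noncomputable def lamc (hbij : Function.Bijective (Lmap j x)) (K : Finset (Fin s)) :
    A →ₗ[ℚ] A :=
  (LinearMap.proj K) ∘ₗ (coeffn hbij) ∘ₗ φ.toLinearMap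

lemma lamc_apply (hbij : Function.Bijective (Lmap j x)) (K : Finset (Fin s)) (u : A) :
    lamc x j φ hbij K u = coeffn hbij (φ u) K := rfl

lemma phi_expand (hbij : Function.Bijective (Lmap j x)) (u : A) :
    φ u = ∑ K, orderedProd x K * j (lamc x j φ hbij K u) := by
  conv_lhs => rw [← Lmap_coeffn hbij (φ u)]
  rfl

lemma lamc_grade (hbij : Function.Bijective (Lmap j x))
    (hj : ∀ (n : ℤ) (a : A), a ∈ 𝒜 n → j a ∈ ℬ n) (hx : ∀ i, x i ∈ ℬ 1)
    (hφdeg : ∀ (n : ℤ) (a : A), a ∈ 𝒜 n → φ a ∈ ℬ n)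
    {m : ℤ} {u : A} (hu : u ∈ 𝒜 m) (K : Finset (Fin s)) :
    lamc x j φ hbij K u ∈ 𝒜 (m - K.card) :=
  coeffn_graded 𝒜 ℬ hbij hj hx (hφdeg m u hu) K

noncomputable def eps (hcB : IsGradedComm B ℬ) (hx : ∀ i, x i ∈ ℬ 1)
    (I J : Finset (Fin s)) : ℚ :=
  (orderedProd_mul ℬ x hcB hx I J).choose

lemma eps_spec (hcB : IsGradedComm B ℬ) (hx : ∀ i, x i ∈ ℬ 1) (I J : Finset (Fin s)) :
    orderedProd x I * orderedProd x J = eps ℬ x hcB hx I J • orderedProd x (I ∪ J) ∧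
      (¬ Disjoint I J → eps ℬ x hcB hx I J = 0) ∧ (I = ∅ → eps ℬ x hcB hx I J = 1) ∧
      (J = ∅ → eps ℬ x hcB hx I J = 1) :=
  (orderedProd_mul ℬ x hcB hx I J).choose_spec

/-- identity (4): `u = ∑_K e(x_K) * λ_K u`. -/
lemma e_phi_sum (hbij : Function.Bijective (Lmap j x))
    (hej : e.comp j = AlgHom.id ℚ A) (heφ : e.comp φ = AlgHom.id ℚ A) (u : A) :
    u = ∑ K, e (orderedProd x K) * lamc x j φ hbij K u := by
  conv_lhs => rw [show u = e (φ u) from (DFunLike.congr_fun heφ u).symm]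
  rw [phi_expand x j φ hbij u, map_sum]
  refine Finset.sum_congr rfl fun K _ => ?_
  rw [map_mul]
  congr 1
  exact DFunLike.congr_fun hej _

lemma master_term (hcB : IsGradedComm B ℬ) (hx : ∀ i, x i ∈ ℬ 1)
    (hj : ∀ (n : ℤ) (a : A), a ∈ 𝒜 n → j a ∈ ℬ n)
    {m : ℤ} {a : A} (ha : a ∈ 𝒜 m) (b : A) (I J : Finset (Fin s)) :
    (orderedProd x I * j a) * (orderedProd x J * j b) =
      (((-1:ℚ)^(m * (J.card : ℤ))) * eps ℬ x hcB hx I J) •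
        (orderedProd x (I ∪ J) * j (a * b)) := by
  have hmove : j a * orderedProd x J = ((-1:ℚ)^(m * (J.card : ℤ))) • (orderedProd x J * j a) :=
    hcB _ _ _ _ (hj _ a ha) (orderedProd_mem ℬ x hx J)
  have step1 : (orderedProd x I * j a) * (orderedProd x J * j b)
      = orderedProd x I * ((j a * orderedProd x J) * j b) := by
    rw [mul_assoc, mul_assoc]
  rw [step1, hmove, smul_mul_assoc, mul_smul_comm,
    mul_assoc (orderedProd x J) (j a) (j b), ← map_mul, ← mul_assoc,
    (eps_spec ℬ x hcB hx I J).1, smul_mul_assoc, smul_smul]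

lemma master (hcB : IsGradedComm B ℬ) (hx : ∀ i, x i ∈ ℬ 1)
    (hbij : Function.Bijective (Lmap j x))
    (hj : ∀ (n : ℤ) (a : A), a ∈ 𝒜 n → j a ∈ ℬ n)
    (hφdeg : ∀ (n : ℤ) (a : A), a ∈ 𝒜 n → φ a ∈ ℬ n)
    {m : ℤ} {u : A} (hu : u ∈ 𝒜 m) (v : A) (K : Finset (Fin s)) :
    lamc x j φ hbij K (u * v) =
      ∑ p ∈ (Finset.univ ×ˢ Finset.univ).filter
          (fun p : Finset (Fin s) × Finset (Fin s) => p.1 ∪ p.2 = K),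
        (((-1:ℚ)^(((m : ℤ) - p.1.card) * (p.2.card : ℤ))) * eps ℬ x hcB hx p.1 p.2) •
          (lamc x j φ hbij p.1 u * lamc x j φ hbij p.2 v) := by
  have expand : φ u * φ v = Lmap j x (fun K =>
      ∑ p ∈ (Finset.univ ×ˢ Finset.univ).filter
          (fun p : Finset (Fin s) × Finset (Fin s) => p.1 ∪ p.2 = K),
        (((-1:ℚ)^(((m : ℤ) - p.1.card) * (p.2.card : ℤ))) * eps ℬ x hcB hx p.1 p.2) •
          (lamc x j φ hbij p.1 u * lamc x j φ hbij p.2 v)) := by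
    rw [phi_expand x j φ hbij u, phi_expand x j φ hbij v, Finset.sum_mul_sum]
    have hterm : ∀ I J : Finset (Fin s),
        (orderedProd x I * j (lamc x j φ hbij I u)) * (orderedProd x J * j (lamc x j φ hbij J v))
        = (((-1:ℚ)^(((m : ℤ) - I.card) * (J.card : ℤ))) * eps ℬ x hcB hx I J) •
            (orderedProd x (I ∪ J) * j (lamc x j φ hbij I u * lamc x j φ hbij J v)) := by
      intro I J
      exact master_term 𝒜 ℬ x j hcB hx hj
        (lamc_grade 𝒜 ℬ x j φ hbij hj hx hφdeg hu I) _ I J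
    calc ∑ I, ∑ J, (orderedProd x I * j (lamc x j φ hbij I u)) *
            (orderedProd x J * j (lamc x j φ hbij J v))
        = ∑ I, ∑ J, (((-1:ℚ)^(((m : ℤ) - I.card) * (J.card : ℤ))) * eps ℬ x hcB hx I J) •
            (orderedProd x (I ∪ J) * j (lamc x j φ hbij I u * lamc x j φ hbij J v)) := by
          exact Finset.sum_congr rfl fun I _ => Finset.sum_congr rfl fun J _ => hterm I J
      _ = ∑ p ∈ Finset.univ ×ˢ Finset.univ,
            (((-1:ℚ)^(((m : ℤ) - p.1.card) * (p.2.card : ℤ))) * eps ℬ x hcB hx p.1 p.2) •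
            (orderedProd x (p.1 ∪ p.2) * j (lamc x j φ hbij p.1 u * lamc x j φ hbij p.2 v)) :=
          (Finset.sum_product' _ _ _).symm
      _ = ∑ K : Finset (Fin s), ∑ p ∈ (Finset.univ ×ˢ Finset.univ).filter
            (fun p : Finset (Fin s) × Finset (Fin s) => p.1 ∪ p.2 = K),
            (((-1:ℚ)^(((m : ℤ) - p.1.card) * (p.2.card : ℤ))) * eps ℬ x hcB hx p.1 p.2) •
            (orderedProd x (p.1 ∪ p.2) * j (lamc x j φ hbij p.1 u * lamc x j φ hbij p.2 v)) := by
          rw [Finset.sum_fiberwise]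
      _ = Lmap j x _ := by
          rw [Lmap_apply]
          refine Finset.sum_congr rfl fun K _ => ?_
          rw [map_sum, Finset.mul_sum]
          refine Finset.sum_congr rfl fun p hp => ?_
          have hpK : p.1 ∪ p.2 = K := (Finset.mem_filter.mp hp).2
          rw [hpK, map_smul, mul_smul_comm]
  have main : Lmap j x (fun K => lamc x j φ hbij K (u * v)) = φ (u * v) := by
    have : (fun K => lamc x j φ hbij K (u * v)) = coeffn hbij (φ (u * v)) := rfl
    rw [this, Lmap_coeffn]
  have heq : (fun K => lamc x j φ hbij K (u * v)) = (fun K =>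
      ∑ p ∈ (Finset.univ ×ˢ Finset.univ).filter
          (fun p : Finset (Fin s) × Finset (Fin s) => p.1 ∪ p.2 = K),
        (((-1:ℚ)^(((m : ℤ) - p.1.card) * (p.2.card : ℤ))) * eps ℬ x hcB hx p.1 p.2) •
          (lamc x j φ hbij p.1 u * lamc x j φ hbij p.2 v)) := by
    apply hbij.injective
    show Lmap j x _ = Lmap j x _
    rw [main, map_mul, expand]
  exact congrFun heq K

end Core2

section Core3

variable {A B : Type*} [Ring A] [Algebra ℚ A] [Ring B] [Algebra ℚ B]
variable {s : ℕ}
variable (𝒜 : ℤ → Submodule ℚ A) (ℬ : ℤ → Submodule ℚ B) [GradedRing 𝒜] [GradedRing ℬ]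
variable (x : Fin s → B) (j : A →ₐ[ℚ] B) (φ : A →ₐ[ℚ] B) (e : B →ₐ[ℚ] A)

lemma gproj_mul_expand (r : ℤ) (z y : A) :
    gproj 𝒜 r (z * y) = ∑ p ∈ DFinsupp.support (DirectSum.decompose 𝒜 z),
      gproj 𝒜 p z * gproj 𝒜 (r - p) y := by
  conv_lhs => rw [← gproj_sum_support 𝒜 z, Finset.sum_mul, map_sum]
  exact Finset.sum_congr rfl fun p _ => gproj_mul_left 𝒜 (gproj_mem 𝒜 p z) r y

noncomputable def ccoef (k : Fin s) : A := gproj 𝒜 0 (e (x k))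

lemma ccoef_mem (k : Fin s) : ccoef 𝒜 x e k ∈ 𝒜 0 := gproj_mem 𝒜 0 _

lemma ccoef_mul_ccoef (hcA : IsGradedComm A 𝒜) (hcB : IsGradedComm B ℬ)
    (hx : ∀ i, x i ∈ ℬ 1) (hno : NoNegativeDerivations A 𝒜) (k t : Fin s) :
    ccoef 𝒜 x e k * ccoef 𝒜 x e t = 0 := by
  have hanti : e (x k) * e (x t) + e (x t) * e (x k) = 0 := by
    rw [← map_mul, ← map_mul, ← map_add]
    rw [deg1_anticomm ℬ hcB (hx k) (hx t)]
    simp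
  have key : ∀ a b : B, gproj 𝒜 0 (e a * e b)
      = gproj 𝒜 0 (e a) * gproj 𝒜 0 (e b) := by
    intro a b
    rw [gproj_mul_expand 𝒜 0 (e a) (e b), Finset.sum_eq_single 0]
    · rw [sub_zero]
    · intro q _ hq
      rcases lt_or_gt_of_ne hq with h | h
      · rw [neg_mul_eq_zero 𝒜 hcA hno h (gproj_mem 𝒜 q (e a))
          (show (0:ℤ) - q ≠ 0 by omega) (gproj_mem 𝒜 (0 - q) (e b))]
      · rw [mul_neg_eq_zero 𝒜 hcA hno (show (0:ℤ) - q < 0 by omega)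
          (gproj_mem 𝒜 (0 - q) (e b)) (show q ≠ 0 by omega) (gproj_mem 𝒜 q (e a))]
    · intro h
      rw [gproj_not_support 𝒜 h, zero_mul]
  have h1 := key (x k) (x t)
  have h2 := key (x t) (x k)
  have hsum : gproj 𝒜 0 (e (x k) * e (x t)) + gproj 𝒜 0 (e (x t) * e (x k)) = 0 := by
    rw [← map_add, hanti, map_zero]
  rw [h1, h2] at hsum
  have hcomm : gproj 𝒜 0 (e (x t)) * gproj 𝒜 0 (e (x k))
      = gproj 𝒜 0 (e (x k)) * gproj 𝒜 0 (e (x t)) :=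
    (deg0_central 𝒜 hcA (gproj_mem 𝒜 0 _) _).symm
  rw [hcomm] at hsum
  exact qhalf hsum

noncomputable def cIdeal : Submodule ℚ A :=
  Submodule.span ℚ {y | ∃ k a, y = ccoef 𝒜 x e k * a}

noncomputable def negSub : Submodule ℚ A :=
  Submodule.span ℚ {y | ∃ p : ℤ, p < 0 ∧ y ∈ 𝒜 p}

lemma mul_cIdeal (hcA : IsGradedComm A 𝒜) (b : A) {g : A} (hg : g ∈ cIdeal 𝒜 x e) :
    b * g ∈ cIdeal 𝒜 x e := by
  induction hg using Submodule.span_induction with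
  | mem y hy =>
      obtain ⟨k, a, rfl⟩ := hy
      have : b * (ccoef 𝒜 x e k * a) = ccoef 𝒜 x e k * (b * a) := by
        rw [← mul_assoc, ← deg0_central 𝒜 hcA (ccoef_mem 𝒜 x e k) b, mul_assoc]
      rw [this]
      exact Submodule.subset_span ⟨k, b * a, rfl⟩
  | zero => rw [mul_zero]; exact Submodule.zero_mem _
  | add y z _ _ hy hz => rw [mul_add]; exact Submodule.add_mem _ hy hz
  | smul q y _ hy => rw [mul_smul_comm]; exact Submodule.smul_mem _ q hy

lemma ccoef_mul_cIdeal (hcA : IsGradedComm A 𝒜) (hcB : IsGradedComm B ℬ)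
    (hx : ∀ i, x i ∈ ℬ 1) (hno : NoNegativeDerivations A 𝒜) (k : Fin s) {g : A}
    (hg : g ∈ cIdeal 𝒜 x e) : ccoef 𝒜 x e k * g = 0 := by
  induction hg using Submodule.span_induction with
  | mem y hy =>
      obtain ⟨t, a, rfl⟩ := hy
      rw [← mul_assoc, ccoef_mul_ccoef 𝒜 ℬ x e hcA hcB hx hno k t, zero_mul]
  | zero => rw [mul_zero]
  | add y z _ _ hy hz => rw [mul_add, hy, hz, add_zero]
  | smul q y _ hy => rw [mul_smul_comm, hy, smul_zero]

lemma homog_mul_negSub (hcA : IsGradedComm A 𝒜) (hno : NoNegativeDerivations A 𝒜)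
    {p : ℤ} (hp : p ≠ 0) {z : A} (hz : z ∈ 𝒜 p) {n : A} (hn : n ∈ negSub 𝒜) :
    z * n = 0 := by
  induction hn using Submodule.span_induction with
  | mem y hy =>
      obtain ⟨q, hq, hymem⟩ := hy
      exact mul_neg_eq_zero 𝒜 hcA hno hq hymem hp hz
  | zero => rw [mul_zero]
  | add y z' _ _ hy hz' => rw [mul_add, hy, hz', add_zero]
  | smul q y _ hy => rw [mul_smul_comm, hy, smul_zero]

lemma gproj_cIdeal (r : ℤ) {g : A} (hg : g ∈ cIdeal 𝒜 x e) :
    gproj 𝒜 r g ∈ cIdeal 𝒜 x e := by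
  induction hg using Submodule.span_induction with
  | mem y hy =>
      obtain ⟨k, a, rfl⟩ := hy
      have : gproj 𝒜 r (ccoef 𝒜 x e k * a) = ccoef 𝒜 x e k * gproj 𝒜 (r - 0) a :=
        gproj_mul_left 𝒜 (ccoef_mem 𝒜 x e k) r a
      rw [this]
      exact Submodule.subset_span ⟨k, _, rfl⟩
  | zero => rw [map_zero]; exact Submodule.zero_mem _
  | add y z _ _ hy hz => rw [map_add]; exact Submodule.add_mem _ hy hz
  | smul q y _ hy => rw [map_smul]; exact Submodule.smul_mem _ q hy

lemma gproj_pos_negSub {r : ℤ} (hr : 0 < r) {n : A} (hn : n ∈ negSub 𝒜) :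
    gproj 𝒜 r n = 0 := by
  induction hn using Submodule.span_induction with
  | mem y hy =>
      obtain ⟨q, hq, hymem⟩ := hy
      exact gproj_of_mem_ne 𝒜 hymem (by omega)
  | zero => rw [map_zero]
  | add y z _ _ hy hz => rw [map_add, hy, hz, add_zero]
  | smul q y _ hy => rw [map_smul, hy, smul_zero]

/-- The structure lemma: low components of products of the `e (x i)` lie in
`cIdeal ⊔ negSub`, provided the degree-1 components vanish. -/
lemma mu_component_mem (hcA : IsGradedComm A 𝒜) (hno : NoNegativeDerivations A 𝒜)
    (hnorm : ∀ k, gproj 𝒜 1 (e (x k)) = 0) :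
    ∀ l : List (Fin s), l ≠ [] → ∀ r : ℤ, r ≤ l.length →
      gproj 𝒜 r ((l.map (fun i => e (x i))).prod) ∈ cIdeal 𝒜 x e ⊔ negSub 𝒜 := by
  intro l
  induction l with
  | nil => intro h; exact absurd rfl h
  | cons i l' ih =>
      intro _ r hr
      simp only [List.map_cons, List.prod_cons]
      rw [gproj_mul_expand]
      refine Submodule.sum_mem _ fun p _ => ?_
      by_cases hp0 : p = 0
      · subst hp0
        refine Submodule.mem_sup_left (Submodule.subset_span ⟨i, _, rfl⟩)
      · by_cases hp1 : p = 1
        · subst hp1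
          rw [hnorm i, zero_mul]
          exact Submodule.zero_mem _
        · rcases lt_trichotomy p 0 with hplt | hpz | hppos
          · by_cases hrneg : r < 0
            · refine Submodule.mem_sup_right (Submodule.subset_span ⟨r, hrneg, ?_⟩)
              have := SetLike.mul_mem_graded (gproj_mem 𝒜 p (e (x i)))
                (gproj_mem 𝒜 (r - p) ((l'.map (fun i => e (x i))).prod))
              convert this using 2
              ring
            · rw [neg_mul_eq_zero 𝒜 hcA hno hplt (gproj_mem 𝒜 p (e (x i)))
                (show r - p ≠ 0 by omega) (gproj_mem 𝒜 (r - p) _)]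
              exact Submodule.zero_mem _
          · exact absurd hpz hp0
          · have hp2 : 2 ≤ p := by omega
            by_cases hl'ne : l' = []
            · subst hl'ne
              simp only [List.map_nil, List.prod_nil]
              rw [gproj_of_mem_ne 𝒜 (SetLike.one_mem_graded 𝒜)
                (show (0:ℤ) ≠ r - p by simp only [List.length_cons, List.length_nil] at hr; omega),
                mul_zero]
              exact Submodule.zero_mem _
            · have hrp : r - p ≤ l'.length := by
                simp only [List.length_cons] at hr
                omega
              have hIH := ih hl'ne (r - p) hrp
              rw [Submodule.mem_sup] at hIH
              obtain ⟨g, hg, n, hn, heq⟩ := hIH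
              rw [← heq, mul_add]
              refine Submodule.add_mem _ ?_ ?_
              · exact Submodule.mem_sup_left (mul_cIdeal 𝒜 x e hcA _ hg)
              · rw [homog_mul_negSub 𝒜 hcA hno hp0 (gproj_mem 𝒜 p (e (x i))) hn]
                exact Submodule.zero_mem _

end Core3

section Core4

variable {A B : Type*} [Ring A] [Algebra ℚ A] [Ring B] [Algebra ℚ B]
variable {s : ℕ}
variable (𝒜 : ℤ → Submodule ℚ A) (ℬ : ℤ → Submodule ℚ B) [GradedRing 𝒜] [GradedRing ℬ]
variable (x : Fin s → B) (j : A →ₐ[ℚ] B) (φ : A →ₐ[ℚ] B) (e : B →ₐ[ℚ] A)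

lemma e_orderedProd (K : Finset (Fin s)) :
    e (orderedProd x K) = ((K.sort (· ≤ ·)).map (fun i => e (x i))).prod := by
  rw [orderedProd, map_list_prod, List.map_map]
  rfl

noncomputable def wcoef (K : Finset (Fin s)) : A := gproj 𝒜 (K.card) (e (orderedProd x K))

lemma wcoef_empty : wcoef 𝒜 x e (∅ : Finset (Fin s)) = 1 := by
  unfold wcoef
  rw [orderedProd_empty, map_one]
  simpa using gproj_of_mem_same 𝒜 (SetLike.one_mem_graded 𝒜)

lemma wcoef_mem_cIdeal (hcA : IsGradedComm A 𝒜) (hno : NoNegativeDerivations A 𝒜)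
    (hnorm : ∀ k, gproj 𝒜 1 (e (x k)) = 0) {K : Finset (Fin s)} (hK : K ≠ ∅) :
    wcoef 𝒜 x e K ∈ cIdeal 𝒜 x e := by
  have hl : K.sort (· ≤ ·) ≠ [] := by
    intro h
    have hlen := Finset.length_sort (α := Fin s) (· ≤ ·) (s := K)
    rw [h] at hlen
    exact hK (Finset.card_eq_zero.mp hlen.symm)
  have hmem := mu_component_mem 𝒜 x e hcA hno hnorm (K.sort (· ≤ ·)) hl K.card
    (by rw [Finset.length_sort])
  rw [← e_orderedProd] at hmem
  rw [Submodule.mem_sup] at hmem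
  obtain ⟨g, hg, n, hn, heq⟩ := hmem
  have hcard : (0:ℤ) < K.card := by
    have : 0 < K.card := Finset.card_pos.mpr (Finset.nonempty_iff_ne_empty.mpr hK)
    exact_mod_cast this
  have hw : wcoef 𝒜 x e K = gproj 𝒜 K.card (wcoef 𝒜 x e K) :=
    (gproj_of_mem_same 𝒜 (gproj_mem 𝒜 _ _)).symm
  have : wcoef 𝒜 x e K = gproj 𝒜 K.card g := by
    rw [hw]
    conv_lhs => rw [show wcoef 𝒜 x e K = g + n from heq.symm]
    rw [map_add, gproj_pos_negSub 𝒜 hcard hn, add_zero]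
  rw [this]
  exact gproj_cIdeal 𝒜 x e _ hg

lemma tau_expand (hbij : Function.Bijective (Lmap j x))
    (hej : e.comp j = AlgHom.id ℚ A) (heφ : e.comp φ = AlgHom.id ℚ A)
    (hj : ∀ (n : ℤ) (a : A), a ∈ 𝒜 n → j a ∈ ℬ n) (hx : ∀ i, x i ∈ ℬ 1)
    (hφdeg : ∀ (n : ℤ) (a : A), a ∈ 𝒜 n → φ a ∈ ℬ n)
    {n : ℤ} {u : A} (hu : u ∈ 𝒜 n) :
    u - lamc x j φ hbij ∅ u
      = ∑ K ∈ Finset.univ.erase ∅, wcoef 𝒜 x e K * lamc x j φ hbij K u := by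
  have h5 : u = ∑ K, wcoef 𝒜 x e K * lamc x j φ hbij K u := by
    calc u = gproj 𝒜 n u := (gproj_of_mem_same 𝒜 hu).symm
    _ = gproj 𝒜 n (∑ K, e (orderedProd x K) * lamc x j φ hbij K u) := by
        rw [← e_phi_sum x j φ e hbij hej heφ u]
    _ = ∑ K, wcoef 𝒜 x e K * lamc x j φ hbij K u := by
        rw [map_sum]
        refine Finset.sum_congr rfl fun K _ => ?_
        rw [gproj_mul_right 𝒜 (lamc_grade 𝒜 ℬ x j φ hbij hj hx hφdeg hu K) n
          (e (orderedProd x K)), show n - (n - (K.card:ℤ)) = (K.card:ℤ) by ring]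
        rfl
  have hsplit : ∑ K, wcoef 𝒜 x e K * lamc x j φ hbij K u
      = wcoef 𝒜 x e ∅ * lamc x j φ hbij ∅ u
        + ∑ K ∈ Finset.univ.erase ∅, wcoef 𝒜 x e K * lamc x j φ hbij K u :=
    (Finset.add_sum_erase _ _ (Finset.mem_univ ∅)).symm
  rw [hsplit, wcoef_empty, one_mul] at h5
  exact sub_eq_of_eq_add' h5

lemma cc_tau (hcA : IsGradedComm A 𝒜) (hno : NoNegativeDerivations A 𝒜)
    (hcB : IsGradedComm B ℬ)
    (hbij : Function.Bijective (Lmap j x))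
    (hej : e.comp j = AlgHom.id ℚ A) (heφ : e.comp φ = AlgHom.id ℚ A)
    (hj : ∀ (n : ℤ) (a : A), a ∈ 𝒜 n → j a ∈ ℬ n) (hx : ∀ i, x i ∈ ℬ 1)
    (hφdeg : ∀ (n : ℤ) (a : A), a ∈ 𝒜 n → φ a ∈ ℬ n)
    (hnorm : ∀ k, gproj 𝒜 1 (e (x k)) = 0)
    (k : Fin s) (u : A) :
    ccoef 𝒜 x e k * (u - lamc x j φ hbij ∅ u) = 0 := by
  set T : A →ₗ[ℚ] A :=
    (LinearMap.mulLeft ℚ (ccoef 𝒜 x e k)) ∘ₗ (LinearMap.id - lamc x j φ hbij ∅) with hT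
  have hhom : ∀ (n : ℤ) (u : A), u ∈ 𝒜 n → T u = 0 := by
    intro n u hu
    have : T u = ccoef 𝒜 x e k * (u - lamc x j φ hbij ∅ u) := rfl
    rw [this, tau_expand 𝒜 ℬ x j φ e hbij hej heφ hj hx hφdeg hu, Finset.mul_sum]
    refine Finset.sum_eq_zero fun K hK => ?_
    rw [← mul_assoc, ccoef_mul_cIdeal 𝒜 ℬ x e hcA hcB hx hno k
      (wcoef_mem_cIdeal 𝒜 x e hcA hno hnorm (Finset.mem_erase.mp hK).1), zero_mul]
  have : T u = 0 := by
    conv_lhs => rw [show u = ∑ q ∈ DFinsupp.support (DirectSum.decompose 𝒜 u), gproj 𝒜 q u from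
      (gproj_sum_support 𝒜 u).symm]
    rw [map_sum]
    exact Finset.sum_eq_zero fun q _ => hhom q _ (gproj_mem 𝒜 q u)
  exact this

end Core4

section Core5

variable {A B : Type*} [Ring A] [Algebra ℚ A] [Ring B] [Algebra ℚ B]
variable {s : ℕ}
variable (𝒜 : ℤ → Submodule ℚ A) (ℬ : ℤ → Submodule ℚ B) [GradedRing 𝒜] [GradedRing ℬ]
variable (x : Fin s → B) (j : A →ₐ[ℚ] B) (φ : A →ₐ[ℚ] B) (e : B →ₐ[ℚ] A)

lemma pair_filter_split {M : Type*} [AddCommMonoid M] {K : Finset (Fin s)} (hK : K ≠ ∅)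
    (f : Finset (Fin s) × Finset (Fin s) → M) :
    ∑ p ∈ (Finset.univ ×ˢ Finset.univ).filter
        (fun p : Finset (Fin s) × Finset (Fin s) => p.1 ∪ p.2 = K), f p
      = f (K, ∅) + f (∅, K) + ∑ p ∈ ((((Finset.univ ×ˢ Finset.univ).filter
          (fun p : Finset (Fin s) × Finset (Fin s) => p.1 ∪ p.2 = K)).erase (K, ∅)).erase (∅, K)),
          f p := by
  have h1 : ((K, ∅) : Finset (Fin s) × Finset (Fin s)) ∈ (Finset.univ ×ˢ Finset.univ).filter
      (fun p : Finset (Fin s) × Finset (Fin s) => p.1 ∪ p.2 = K) := by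
    refine Finset.mem_filter.mpr ⟨Finset.mem_univ _, ?_⟩
    simp
  have h2 : ((∅, K) : Finset (Fin s) × Finset (Fin s)) ∈ (((Finset.univ ×ˢ Finset.univ).filter
      (fun p : Finset (Fin s) × Finset (Fin s) => p.1 ∪ p.2 = K)).erase (K, ∅)) := by
    refine Finset.mem_erase.mpr ⟨?_, Finset.mem_filter.mpr ⟨Finset.mem_univ _, by simp⟩⟩
    intro h
    rw [Prod.ext_iff] at h
    exact hK h.1.symm
  rw [← Finset.add_sum_erase _ f h1, ← Finset.add_sum_erase _ f h2, ← add_assoc]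

lemma middle_classify {K : Finset (Fin s)} {p : Finset (Fin s) × Finset (Fin s)}
    (hunion : p.1 ∪ p.2 = K) (h1 : p ≠ (K, ∅)) (h2 : p ≠ (∅, K))
    (hdisj : Disjoint p.1 p.2) : p.2 ≠ ∅ ∧ p.2.card < K.card := by
  constructor
  · intro h
    apply h1
    have hp1 : p.1 = K := by rw [← hunion, h, Finset.union_empty]
    exact Prod.ext_iff.mpr ⟨hp1, h⟩
  · have hsub : p.2 ⊆ K := by rw [← hunion]; exact Finset.subset_union_right
    have hne : p.2 ≠ K := by
      intro h
      apply h2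
      have h1' : p.1 ⊆ K := by rw [← hunion]; exact Finset.subset_union_left
      have hp1 : p.1 = ∅ := by
        rw [h] at hdisj
        refine Finset.eq_empty_of_forall_notMem fun a ha => ?_
        exact Finset.disjoint_left.mp hdisj ha (h1' ha)
      exact Prod.ext_iff.mpr ⟨hp1, h⟩
    exact Finset.card_lt_card (ssubset_of_subset_of_ne hsub hne)

lemma cc_lam (hcA : IsGradedComm A 𝒜) (hcB : IsGradedComm B ℬ)
    (hno : NoNegativeDerivations A 𝒜)
    (hbij : Function.Bijective (Lmap j x))
    (hej : e.comp j = AlgHom.id ℚ A) (heφ : e.comp φ = AlgHom.id ℚ A)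
    (hj : ∀ (n : ℤ) (a : A), a ∈ 𝒜 n → j a ∈ ℬ n) (hx : ∀ i, x i ∈ ℬ 1)
    (hφdeg : ∀ (n : ℤ) (a : A), a ∈ 𝒜 n → φ a ∈ ℬ n)
    (hnorm : ∀ k, gproj 𝒜 1 (e (x k)) = 0) :
    ∀ (r : ℕ) (K : Finset (Fin s)), K.card = r → K ≠ ∅ →
      ∀ (k : Fin s) (u : A), ccoef 𝒜 x e k * lamc x j φ hbij K u = 0 := by
  intro r
  induction r using Nat.strong_induction_on with
  | _ r ih =>
    intro K hcard hKne k
    have hKr : (K.card : ℤ) = (r : ℤ) := by rw [hcard]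
    have hrpos : 0 < K.card := Finset.card_pos.mpr (Finset.nonempty_iff_ne_empty.mpr hKne)
    have hD := hno (-(r:ℤ)) (by omega)
    set D : GradedDerivation A 𝒜 (-(r:ℤ)) :=
      { toLin := (LinearMap.mulLeft ℚ (ccoef 𝒜 x e k)) ∘ₗ (lamc x j φ hbij K)
        mem_of_mem := by
          intro n u hu
          simp only [LinearMap.comp_apply, LinearMap.mulLeft_apply]
          have hmem := SetLike.mul_mem_graded (ccoef_mem 𝒜 x e k)
            (lamc_grade 𝒜 ℬ x j φ hbij hj hx hφdeg hu K)
          convert hmem using 2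
          omega
        leibniz := by
          intro m n u v hu hv
          simp only [LinearMap.comp_apply, LinearMap.mulLeft_apply]
          rw [master 𝒜 ℬ x j φ hcB hx hbij hj hφdeg hu v K,
            pair_filter_split (hK := hKne), mul_add, mul_add]
          have hrest : ccoef 𝒜 x e k * (∑ p ∈ ((((Finset.univ ×ˢ Finset.univ).filter
              (fun p : Finset (Fin s) × Finset (Fin s) => p.1 ∪ p.2 = K)).erase (K, ∅)).erase
                (∅, K)),
              (((-1:ℚ)^(((m : ℤ) - p.1.card) * (p.2.card : ℤ))) * eps ℬ x hcB hx p.1 p.2) •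
                (lamc x j φ hbij p.1 u * lamc x j φ hbij p.2 v)) = 0 := by
            rw [Finset.mul_sum]
            refine Finset.sum_eq_zero fun p hp => ?_
            have hp2 := Finset.mem_erase.mp hp
            have hp3 := Finset.mem_erase.mp hp2.2
            have hunion := (Finset.mem_filter.mp hp3.2).2
            rw [mul_smul_comm]
            by_cases hdisj : Disjoint p.1 p.2
            · obtain ⟨hJne, hJlt⟩ := middle_classify hunion hp3.1 hp2.1 hdisj
              have hmid : ccoef 𝒜 x e k * (lamc x j φ hbij p.1 u * lamc x j φ hbij p.2 v)
                  = 0 := by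
                rw [← mul_assoc, deg0_central 𝒜 hcA (ccoef_mem 𝒜 x e k), mul_assoc,
                  ih p.2.card (by omega) p.2 rfl hJne k v, mul_zero]
              rw [hmid, smul_zero]
            · rw [(eps_spec ℬ x hcB hx p.1 p.2).2.1 hdisj, mul_zero, zero_smul]
          have hspec1 : ccoef 𝒜 x e k *
              ((((-1:ℚ)^(((m : ℤ) - (K.card : ℤ)) * ((∅ : Finset (Fin s)).card : ℤ)))
                * eps ℬ x hcB hx K ∅) •
                (lamc x j φ hbij K u * lamc x j φ hbij ∅ v))
              = ccoef 𝒜 x e k * lamc x j φ hbij K u * v := by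
            rw [(eps_spec ℬ x hcB hx K ∅).2.2.2 rfl]
            simp only [Finset.card_empty, Nat.cast_zero, mul_zero, zpow_zero, mul_one, one_smul]
            rw [show lamc x j φ hbij ∅ v = v - (v - lamc x j φ hbij ∅ v) from
              (sub_sub_cancel _ _).symm, mul_sub, mul_sub]
            have hz : ccoef 𝒜 x e k * (lamc x j φ hbij K u * (v - lamc x j φ hbij ∅ v)) = 0 := by
              rw [← mul_assoc, deg0_central 𝒜 hcA (ccoef_mem 𝒜 x e k), mul_assoc,
                cc_tau 𝒜 ℬ x j φ e hcA hno hcB hbij hej heφ hj hx hφdeg hnorm k v, mul_zero]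
            rw [hz, sub_zero, ← mul_assoc]
          have hspec2 : ccoef 𝒜 x e k *
              ((((-1:ℚ)^(((m : ℤ) - ((∅ : Finset (Fin s)).card : ℤ)) * (K.card : ℤ)))
                * eps ℬ x hcB hx ∅ K) •
                (lamc x j φ hbij ∅ u * lamc x j φ hbij K v))
              = ((-1:ℚ)^((-(r:ℤ)) * m)) • (u * (ccoef 𝒜 x e k * lamc x j φ hbij K v)) := by
            rw [(eps_spec ℬ x hcB hx ∅ K).2.2.1 rfl]
            simp only [Finset.card_empty, Nat.cast_zero, sub_zero, mul_one]
            rw [mul_smul_comm]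
            have hsgn : ((-1:ℚ)^((m : ℤ) * (K.card : ℤ))) = ((-1:ℚ)^((-(r:ℤ)) * m)) :=
              neg_one_zpow_congr ⟨m * r, by rw [hKr]; ring⟩
            rw [hsgn]
            congr 1
            rw [show lamc x j φ hbij ∅ u = u - (u - lamc x j φ hbij ∅ u) from
              (sub_sub_cancel _ _).symm, sub_mul, mul_sub]
            have hz : ccoef 𝒜 x e k * ((u - lamc x j φ hbij ∅ u) * lamc x j φ hbij K v) = 0 := by
              rw [← mul_assoc,
                cc_tau 𝒜 ℬ x j φ e hcA hno hcB hbij hej heφ hj hx hφdeg hnorm k u, zero_mul]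
            rw [hz, sub_zero, ← mul_assoc, deg0_central 𝒜 hcA (ccoef_mem 𝒜 x e k), mul_assoc]
          rw [hrest, hspec1, hspec2, add_zero] } with hDdef
    intro u
    have h0 : D.toLin u = 0 := by rw [hD D]; rfl
    simpa [hDdef] using h0

end Core5

section Core6

variable {A B : Type*} [Ring A] [Algebra ℚ A] [Ring B] [Algebra ℚ B]
variable {s : ℕ}
variable (𝒜 : ℤ → Submodule ℚ A) (ℬ : ℤ → Submodule ℚ B) [GradedRing 𝒜] [GradedRing ℬ]
variable (x : Fin s → B) (j : A →ₐ[ℚ] B) (φ : A →ₐ[ℚ] B) (e : B →ₐ[ℚ] A)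

lemma lam_empty_id (hcA : IsGradedComm A 𝒜) (hcB : IsGradedComm B ℬ)
    (hno : NoNegativeDerivations A 𝒜)
    (hbij : Function.Bijective (Lmap j x))
    (hej : e.comp j = AlgHom.id ℚ A) (heφ : e.comp φ = AlgHom.id ℚ A)
    (hj : ∀ (n : ℤ) (a : A), a ∈ 𝒜 n → j a ∈ ℬ n) (hx : ∀ i, x i ∈ ℬ 1)
    (hφdeg : ∀ (n : ℤ) (a : A), a ∈ 𝒜 n → φ a ∈ ℬ n)
    (hnorm : ∀ k, gproj 𝒜 1 (e (x k)) = 0) (u : A) :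
    lamc x j φ hbij ∅ u = u := by
  set T : A →ₗ[ℚ] A := LinearMap.id - lamc x j φ hbij ∅ with hT
  have hgen : ∀ {K : Finset (Fin s)}, K ≠ ∅ → ∀ {g : A}, g ∈ cIdeal 𝒜 x e → ∀ y : A,
      g * lamc x j φ hbij K y = 0 := by
    intro K hKne g hg y
    induction hg using Submodule.span_induction with
    | mem z hz =>
        obtain ⟨t, a, rfl⟩ := hz
        rw [deg0_central 𝒜 hcA (ccoef_mem 𝒜 x e t) a, mul_assoc,
          cc_lam 𝒜 ℬ x j φ e hcA hcB hno hbij hej heφ hj hx hφdeg hnorm K.card K rfl hKne t y,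
          mul_zero]
    | zero => rw [zero_mul]
    | add y' z' _ _ hy' hz' => rw [add_mul, hy', hz', add_zero]
    | smul q y' _ hy' => rw [smul_mul_assoc, hy', smul_zero]
  have hhom : ∀ (n : ℤ) (u : A), u ∈ 𝒜 n → T u = 0 := by
    intro n u hu
    have hTu : T u = u - lamc x j φ hbij ∅ u := rfl
    rw [hTu, tau_expand 𝒜 ℬ x j φ e hbij hej heφ hj hx hφdeg hu]
    refine Finset.sum_eq_zero fun K hK => ?_
    exact hgen (Finset.mem_erase.mp hK).1
      (wcoef_mem_cIdeal 𝒜 x e hcA hno hnorm (Finset.mem_erase.mp hK).1) u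
  have hTu : T u = 0 := by
    conv_lhs => rw [show u = ∑ q ∈ DFinsupp.support (DirectSum.decompose 𝒜 u), gproj 𝒜 q u from
      (gproj_sum_support 𝒜 u).symm]
    rw [map_sum]
    exact Finset.sum_eq_zero fun q _ => hhom q _ (gproj_mem 𝒜 q u)
  have h' : u - lamc x j φ hbij ∅ u = 0 := hTu
  exact (sub_eq_zero.mp h').symm

lemma lam_ne_zero (hcA : IsGradedComm A 𝒜) (hcB : IsGradedComm B ℬ)
    (hno : NoNegativeDerivations A 𝒜)
    (hbij : Function.Bijective (Lmap j x))
    (hej : e.comp j = AlgHom.id ℚ A) (heφ : e.comp φ = AlgHom.id ℚ A)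
    (hj : ∀ (n : ℤ) (a : A), a ∈ 𝒜 n → j a ∈ ℬ n) (hx : ∀ i, x i ∈ ℬ 1)
    (hφdeg : ∀ (n : ℤ) (a : A), a ∈ 𝒜 n → φ a ∈ ℬ n)
    (hnorm : ∀ k, gproj 𝒜 1 (e (x k)) = 0) :
    ∀ (r : ℕ) (K : Finset (Fin s)), K.card = r → K ≠ ∅ →
      ∀ (u : A), lamc x j φ hbij K u = 0 := by
  intro r
  induction r using Nat.strong_induction_on with
  | _ r ih =>
    intro K hcard hKne
    have hKr : (K.card : ℤ) = (r : ℤ) := by rw [hcard]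
    have hrpos : 0 < K.card := Finset.card_pos.mpr (Finset.nonempty_iff_ne_empty.mpr hKne)
    have hD := hno (-(r:ℤ)) (by omega)
    set D : GradedDerivation A 𝒜 (-(r:ℤ)) :=
      { toLin := lamc x j φ hbij K
        mem_of_mem := by
          intro n u hu
          have hmem := lamc_grade 𝒜 ℬ x j φ hbij hj hx hφdeg hu K
          convert hmem using 2
          omega
        leibniz := by
          intro m n u v hu hv
          rw [master 𝒜 ℬ x j φ hcB hx hbij hj hφdeg hu v K,
            pair_filter_split (hK := hKne)]
          have hrest : (∑ p ∈ ((((Finset.univ ×ˢ Finset.univ).filter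
              (fun p : Finset (Fin s) × Finset (Fin s) => p.1 ∪ p.2 = K)).erase (K, ∅)).erase
                (∅, K)),
              (((-1:ℚ)^(((m : ℤ) - p.1.card) * (p.2.card : ℤ))) * eps ℬ x hcB hx p.1 p.2) •
                (lamc x j φ hbij p.1 u * lamc x j φ hbij p.2 v)) = 0 := by
            refine Finset.sum_eq_zero fun p hp => ?_
            have hp2 := Finset.mem_erase.mp hp
            have hp3 := Finset.mem_erase.mp hp2.2
            have hunion := (Finset.mem_filter.mp hp3.2).2
            by_cases hdisj : Disjoint p.1 p.2
            · obtain ⟨hJne, hJlt⟩ := middle_classify hunion hp3.1 hp2.1 hdisj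
              rw [ih p.2.card (by omega) p.2 rfl hJne v, mul_zero, smul_zero]
            · rw [(eps_spec ℬ x hcB hx p.1 p.2).2.1 hdisj, mul_zero, zero_smul]
          have hspec1 : (((-1:ℚ)^(((m : ℤ) - (K.card : ℤ)) * ((∅ : Finset (Fin s)).card : ℤ)))
                * eps ℬ x hcB hx K ∅) •
                (lamc x j φ hbij K u * lamc x j φ hbij ∅ v)
              = lamc x j φ hbij K u * v := by
            rw [(eps_spec ℬ x hcB hx K ∅).2.2.2 rfl,
              lam_empty_id 𝒜 ℬ x j φ e hcA hcB hno hbij hej heφ hj hx hφdeg hnorm v]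
            simp only [Finset.card_empty, Nat.cast_zero, mul_zero, zpow_zero, mul_one, one_smul]
          have hspec2 : (((-1:ℚ)^(((m : ℤ) - ((∅ : Finset (Fin s)).card : ℤ)) * (K.card : ℤ)))
                * eps ℬ x hcB hx ∅ K) •
                (lamc x j φ hbij ∅ u * lamc x j φ hbij K v)
              = ((-1:ℚ)^((-(r:ℤ)) * m)) • (u * lamc x j φ hbij K v) := by
            rw [(eps_spec ℬ x hcB hx ∅ K).2.2.1 rfl,
              lam_empty_id 𝒜 ℬ x j φ e hcA hcB hno hbij hej heφ hj hx hφdeg hnorm u]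
            simp only [Finset.card_empty, Nat.cast_zero, sub_zero, mul_one]
            have hsgn : ((-1:ℚ)^((m : ℤ) * (K.card : ℤ))) = ((-1:ℚ)^((-(r:ℤ)) * m)) :=
              neg_one_zpow_congr ⟨m * r, by rw [hKr]; ring⟩
            rw [hsgn]
          rw [hrest, hspec1, hspec2, add_zero] } with hDdef
    intro u
    have h0 : D.toLin u = 0 := by rw [hD D]; rfl
    simpa [hDdef] using h0

theorem coreMain (hcA : IsGradedComm A 𝒜) (hcB : IsGradedComm B ℬ)
    (hno : NoNegativeDerivations A 𝒜)
    (hbij : Function.Bijective (Lmap j x))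
    (hej : e.comp j = AlgHom.id ℚ A) (heφ : e.comp φ = AlgHom.id ℚ A)
    (hj : ∀ (n : ℤ) (a : A), a ∈ 𝒜 n → j a ∈ ℬ n) (hx : ∀ i, x i ∈ ℬ 1)
    (hφdeg : ∀ (n : ℤ) (a : A), a ∈ 𝒜 n → φ a ∈ ℬ n)
    (hnorm : ∀ k, gproj 𝒜 1 (e (x k)) = 0) :
    ∀ u : A, φ u = j u := by
  intro u
  rw [phi_expand x j φ hbij u, Finset.sum_eq_single ∅]
  · rw [orderedProd_empty, one_mul,
      lam_empty_id 𝒜 ℬ x j φ e hcA hcB hno hbij hej heφ hj hx hφdeg hnorm u]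
  · intro K _ hK
    rw [lam_ne_zero 𝒜 ℬ x j φ e hcA hcB hno hbij hej heφ hj hx hφdeg hnorm K.card K rfl hK u,
      map_zero, mul_zero]
  · intro h
    exact absurd (Finset.mem_univ ∅) h

end Core6

section Transport

variable {A B : Type*} [Ring A] [Algebra ℚ A] [Ring B] [Algebra ℚ B]
variable {s : ℕ}
variable (𝒜 : ℤ → Submodule ℚ A) (ℬ : ℤ → Submodule ℚ B) [GradedRing 𝒜] [GradedRing ℬ]
variable (ι : Fin s → B) (j : A →ₐ[ℚ] B) (e : B →ₐ[ℚ] A)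

noncomputable def xmod (k : Fin s) : B := ι k - j (gproj 𝒜 1 (e (ι k)))

lemma xmod_mem (hι : ∀ i, ι i ∈ ℬ 1) (hj : ∀ (n : ℤ) (a : A), a ∈ 𝒜 n → j a ∈ ℬ n)
    (k : Fin s) : xmod 𝒜 ι j e k ∈ ℬ 1 :=
  Submodule.sub_mem _ (hι k) (hj 1 _ (gproj_mem 𝒜 1 _))

lemma xmod_norm (hej : e.comp j = AlgHom.id ℚ A) (k : Fin s) :
    gproj 𝒜 1 (e (xmod 𝒜 ι j e k)) = 0 := by
  unfold xmod
  rw [map_sub, map_sub]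
  have h2 : e (j (gproj 𝒜 1 (e (ι k)))) = gproj 𝒜 1 (e (ι k)) := by
    have := DFunLike.congr_fun hej (gproj 𝒜 1 (e (ι k)))
    simpa using this
  rw [h2, gproj_of_mem_same 𝒜 (gproj_mem 𝒜 1 (e (ι k))), sub_self]

variable (hbijι : Function.Bijective (Lmap j ι))

noncomputable def Rsub (n : ℕ) : Submodule ℚ B where
  carrier := {b | ∀ K : Finset (Fin s), n < K.card → coeffn hbijι b K = 0}
  add_mem' := by
    intro a b ha hb K hK
    rw [map_add]
    show coeffn hbijι a K + coeffn hbijι b K = 0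
    rw [ha K hK, hb K hK, add_zero]
  zero_mem' := by
    intro K hK
    rw [map_zero]
    rfl
  smul_mem' := by
    intro q b hb K hK
    rw [map_smul]
    show q • coeffn hbijι b K = 0
    rw [hb K hK, smul_zero]

lemma mem_Rsub {n : ℕ} {b : B} :
    b ∈ Rsub ι j hbijι n ↔ ∀ K : Finset (Fin s), n < K.card → coeffn hbijι b K = 0 :=
  Iff.rfl

lemma basis_mem_Rsub {M : Finset (Fin s)} {n : ℕ} (h : M.card ≤ n) (a : A) :
    orderedProd ι M * j a ∈ Rsub ι j hbijι n := by
  intro K hK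
  rw [coeffn_sing]
  have : K ≠ M := by
    intro hKM
    rw [hKM] at hK
    omega
  simp [sing, this]

lemma Rsub_mono {m n : ℕ} (h : m ≤ n) : Rsub ι j hbijι m ≤ Rsub ι j hbijι n := by
  intro b hb K hK
  exact hb K (by omega)

lemma iota_mul_Rsub (hcB : IsGradedComm B ℬ) (hι : ∀ i, ι i ∈ ℬ 1)
    {n : ℕ} {b : B} (hb : b ∈ Rsub ι j hbijι n) (a : Fin s) :
    ι a * b ∈ Rsub ι j hbijι (n + 1) := by
  have hexp : ι a * b = ∑ K, ι a * (orderedProd ι K * j (coeffn hbijι b K)) := by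
    conv_lhs => rw [← Lmap_coeffn hbijι b, Lmap_apply, Finset.mul_sum]
  rw [hexp]
  refine Submodule.sum_mem _ fun K _ => ?_
  by_cases hcK : coeffn hbijι b K = 0
  · rw [hcK, map_zero, mul_zero, mul_zero]
    exact Submodule.zero_mem _
  · have hKn : K.card ≤ n := by
      by_contra hcon
      exact hcK (hb K (by omega))
    have hterm : ι a * (orderedProd ι K * j (coeffn hbijι b K))
        = eps ℬ ι hcB hι {a} K • (orderedProd ι (insert a K) * j (coeffn hbijι b K)) := by
      rw [← orderedProd_singleton ι a, ← mul_assoc, (eps_spec ℬ ι hcB hι {a} K).1,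
        smul_mul_assoc, ← Finset.insert_eq]
    rw [hterm]
    refine Submodule.smul_mem _ _ (basis_mem_Rsub ι j hbijι ?_ _)
    have := Finset.card_insert_le a K
    omega

lemma jdeg1_mul_Rsub (hcB : IsGradedComm B ℬ) (hι : ∀ i, ι i ∈ ℬ 1)
    (hj : ∀ (n : ℤ) (a : A), a ∈ 𝒜 n → j a ∈ ℬ n)
    {z : A} (hz : z ∈ 𝒜 1) {n : ℕ} {b : B} (hb : b ∈ Rsub ι j hbijι n) :
    j z * b ∈ Rsub ι j hbijι n := by
  have hexp : j z * b = ∑ K, j z * (orderedProd ι K * j (coeffn hbijι b K)) := by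
    conv_lhs => rw [← Lmap_coeffn hbijι b, Lmap_apply, Finset.mul_sum]
  rw [hexp]
  refine Submodule.sum_mem _ fun K _ => ?_
  by_cases hcK : coeffn hbijι b K = 0
  · rw [hcK, map_zero, mul_zero, mul_zero]
    exact Submodule.zero_mem _
  · have hKn : K.card ≤ n := by
      by_contra hcon
      exact hcK (hb K (by omega))
    have hterm : j z * (orderedProd ι K * j (coeffn hbijι b K))
        = ((-1:ℚ)^((1:ℤ) * K.card)) •
            (orderedProd ι K * j (z * coeffn hbijι b K)) := by
      rw [← mul_assoc, hcB 1 K.card (j z) (orderedProd ι K) (hj 1 z hz)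
        (orderedProd_mem ℬ ι hι K), smul_mul_assoc, mul_assoc, ← map_mul]
    rw [hterm]
    exact Submodule.smul_mem _ _ (basis_mem_Rsub ι j hbijι hKn _)

lemma xmod_prod_Rsub (hcB : IsGradedComm B ℬ) (hι : ∀ i, ι i ∈ ℬ 1)
    (hj : ∀ (n : ℤ) (a : A), a ∈ 𝒜 n → j a ∈ ℬ n) :
    ∀ l : List (Fin s), (l.map (xmod 𝒜 ι j e)).prod ∈ Rsub ι j hbijι l.length := by
  intro l
  induction l with
  | nil =>
      simp only [List.map_nil, List.prod_nil, List.length_nil]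
      have h1 : orderedProd ι ∅ * j 1 ∈ Rsub ι j hbijι 0 :=
        basis_mem_Rsub ι j hbijι (by simp) 1
      rwa [orderedProd_empty, map_one, one_mul] at h1
  | cons a l ih =>
      simp only [List.map_cons, List.prod_cons, List.length_cons]
      have : xmod 𝒜 ι j e a * (l.map (xmod 𝒜 ι j e)).prod
          = ι a * (l.map (xmod 𝒜 ι j e)).prod
            - j (gproj 𝒜 1 (e (ι a))) * (l.map (xmod 𝒜 ι j e)).prod := by
        rw [xmod, sub_mul]
      rw [this]
      refine Submodule.sub_mem _ ?_ ?_
      · exact iota_mul_Rsub ℬ ι j hbijι hcB hι ih a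
      · exact Rsub_mono ι j hbijι (by omega)
          (jdeg1_mul_Rsub 𝒜 ℬ ι j hbijι hcB hι hj (gproj_mem 𝒜 1 _) ih)

lemma diff_Rsub (hcB : IsGradedComm B ℬ) (hι : ∀ i, ι i ∈ ℬ 1)
    (hj : ∀ (n : ℤ) (a : A), a ∈ 𝒜 n → j a ∈ ℬ n) :
    ∀ l : List (Fin s), (l.map (xmod 𝒜 ι j e)).prod - (l.map ι).prod
      ∈ Rsub ι j hbijι (l.length - 1) := by
  intro l
  induction l with
  | nil =>
      simp only [List.map_nil, List.prod_nil, List.length_nil, sub_self]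
      exact Submodule.zero_mem _
  | cons a l ih =>
      by_cases hl : l = []
      · subst hl
        simp only [List.map_cons, List.map_nil, List.prod_cons, List.prod_nil, mul_one,
          List.length_cons, List.length_nil]
        have : xmod 𝒜 ι j e a - ι a = -(j (gproj 𝒜 1 (e (ι a)))) := by
          rw [xmod]; abel
        rw [this]
        refine Submodule.neg_mem _ ?_
        have h1 : orderedProd ι ∅ * j (gproj 𝒜 1 (e (ι a))) ∈ Rsub ι j hbijι 0 :=
          basis_mem_Rsub ι j hbijι (by simp) _
        rwa [orderedProd_empty, one_mul] at h1
      · have hlen : 1 ≤ l.length := by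
          cases l with
          | nil => exact absurd rfl hl
          | cons b l' => simp
        simp only [List.map_cons, List.prod_cons, List.length_cons]
        have hsplit : xmod 𝒜 ι j e a * (l.map (xmod 𝒜 ι j e)).prod - ι a * (l.map ι).prod
            = ι a * ((l.map (xmod 𝒜 ι j e)).prod - (l.map ι).prod)
              - j (gproj 𝒜 1 (e (ι a))) * (l.map (xmod 𝒜 ι j e)).prod := by
          rw [xmod, sub_mul, mul_sub]
          abel
        rw [hsplit]
        have hsimp : (l.length + 1) - 1 = (l.length - 1) + 1 := by omega
        rw [hsimp]
        refine Submodule.sub_mem _ ?_ ?_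
        · exact iota_mul_Rsub ℬ ι j hbijι hcB hι ih a
        · refine Rsub_mono ι j hbijι (by omega)
            (jdeg1_mul_Rsub 𝒜 ℬ ι j hbijι hcB hι hj (gproj_mem 𝒜 1 _)
              (xmod_prod_Rsub 𝒜 ℬ ι j e hbijι hcB hι hj l))

lemma diff_Rsub_finset (hcB : IsGradedComm B ℬ) (hι : ∀ i, ι i ∈ ℬ 1)
    (hj : ∀ (n : ℤ) (a : A), a ∈ 𝒜 n → j a ∈ ℬ n) (K : Finset (Fin s)) :
    orderedProd (xmod 𝒜 ι j e) K - orderedProd ι K ∈ Rsub ι j hbijι (K.card - 1) := by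
  have := diff_Rsub 𝒜 ℬ ι j e hbijι hcB hι hj (K.sort (· ≤ ·))
  rwa [Finset.length_sort] at this

lemma basis_in_range (hbijι : Function.Bijective (Lmap j ι))
    (hcB : IsGradedComm B ℬ) (hι : ∀ i, ι i ∈ ℬ 1)
    (hj : ∀ (n : ℤ) (a : A), a ∈ 𝒜 n → j a ∈ ℬ n) :
    ∀ (n : ℕ) (M : Finset (Fin s)), M.card ≤ n → ∀ a : A,
      orderedProd ι M * j a ∈ LinearMap.range (Lmap j (xmod 𝒜 ι j e)) := by
  intro n
  induction n with
  | zero =>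
      intro M hM a
      have hMe : M = ∅ := Finset.card_eq_zero.mp (by omega)
      subst hMe
      refine ⟨sing ∅ a, ?_⟩
      rw [Lmap_sing, orderedProd_empty, orderedProd_empty]
  | succ n ih =>
      intro M hM a
      have h1 : orderedProd (xmod 𝒜 ι j e) M * j a ∈ LinearMap.range (Lmap j (xmod 𝒜 ι j e)) :=
        ⟨sing M a, Lmap_sing _ _ M a⟩
      have hkey : orderedProd ι M * j a = orderedProd (xmod 𝒜 ι j e) M * j a
          - (orderedProd (xmod 𝒜 ι j e) M - orderedProd ι M) * j a := by
        rw [sub_mul, sub_sub_cancel]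
      rw [hkey]
      refine Submodule.sub_mem _ h1 ?_
      set D := orderedProd (xmod 𝒜 ι j e) M - orderedProd ι M with hD
      have hDmem := diff_Rsub_finset 𝒜 ℬ ι j e hbijι hcB hι hj M
      have hexp : D * j a = ∑ K, orderedProd ι K * j (coeffn hbijι D K * a) := by
        conv_lhs => rw [← Lmap_coeffn hbijι D, Lmap_apply, Finset.sum_mul]
        exact Finset.sum_congr rfl fun K _ => by rw [mul_assoc, ← map_mul]
      rw [hexp]
      refine Submodule.sum_mem _ fun K _ => ?_
      by_cases hcK : coeffn hbijι D K = 0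
      · rw [hcK, zero_mul, map_zero, mul_zero]
        exact Submodule.zero_mem _
      · have hKcard : K.card ≤ M.card - 1 := by
          by_contra hcon
          exact hcK (hDmem K (by omega))
        exact ih K (by omega) _

lemma xmod_bij [FiniteDimensional ℚ A] (hbijι : Function.Bijective (Lmap j ι))
    (hcB : IsGradedComm B ℬ) (hι : ∀ i, ι i ∈ ℬ 1)
    (hj : ∀ (n : ℤ) (a : A), a ∈ 𝒜 n → j a ∈ ℬ n) :
    Function.Bijective (Lmap j (xmod 𝒜 ι j e)) := by
  have hsurj : Function.Surjective (Lmap j (xmod 𝒜 ι j e)) := by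
    intro b
    have hb2 : b = Lmap j ι (coeffn hbijι b) := (Lmap_coeffn hbijι b).symm
    have hmem : b ∈ LinearMap.range (Lmap j (xmod 𝒜 ι j e)) := by
      rw [hb2, Lmap_apply]
      exact Submodule.sum_mem _ fun K _ =>
        basis_in_range 𝒜 ℬ ι j e hbijι hcB hι hj K.card K le_rfl _
    exact hmem
  have hUsurj : Function.Surjective ((coeffn hbijι) ∘ₗ (Lmap j (xmod 𝒜 ι j e))) := by
    intro c
    obtain ⟨c', hc'⟩ := hsurj (Lmap j ι c)
    refine ⟨c', ?_⟩
    simp only [LinearMap.comp_apply, hc']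
    exact coeffn_Lmap hbijι c
  have hUinj : Function.Injective ((coeffn hbijι) ∘ₗ (Lmap j (xmod 𝒜 ι j e))) :=
    LinearMap.injective_iff_surjective.mpr hUsurj
  refine ⟨?_, hsurj⟩
  intro c c' h
  exact hUinj (by simp only [LinearMap.comp_apply, h])

end Transport

/-- let `C` be a space whose rational cohomology algebra `A = H^*(C;ℚ)` is
finite-dimensional with no nonzero negative-degree derivations, `T = (S¹)^s` a torus, and
`f : T × C → C` a map with `f(y₀,·)` homotopic to the identity. Model the Künneth isomorphism
`H^*(T×C;ℚ) ≅ H^*(T;ℚ) ⊗ H^*(C;ℚ)` by a graded algebra `B` with exterior degree-1 classes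
`ι_i = H^*(T)`-generators, `j = pr_C^* : A → B` (`u ↦ 1 ⊗ u`) and `{ι_I}` a free basis; let
`φ = f^* : A → B` and `e = (y₀,·)^* : B → A`, so that `e ∘ j = id` (since `pr_C ∘ (y₀,·) = id`)
and `e ∘ φ = id` (by homotopy invariance, since `f(y₀,·) ≃ id`). Then
`f^*(u) = 1 ⊗ u` for all `u`, i.e. `φ = j`. -/
theorem stmt6 (Csp : Type*) [TopologicalSpace Csp] (s : ℕ) (y₀ : Fin s → Circle)
    (f : C((Fin s → Circle) × Csp, Csp))
    (hf : (f.comp ⟨fun c => (y₀, c), (continuous_const.prodMk continuous_id)⟩).Homotopic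
      (ContinuousMap.id Csp))
    (A B : Type*) [Ring A] [Algebra ℚ A] [Ring B] [Algebra ℚ B]
    (𝒜 : ℤ → Submodule ℚ A) (ℬ : ℤ → Submodule ℚ B) [GradedRing 𝒜] [GradedRing ℬ]
    (hcA : IsGradedComm A 𝒜) (hcB : IsGradedComm B ℬ)
    [FiniteDimensional ℚ A] (hno : NoNegativeDerivations A 𝒜)
    (ι : Fin s → B) (hι : ∀ i, ι i ∈ ℬ 1)
    (j : A →ₐ[ℚ] B) (hj : ∀ (n : ℤ) (a : A), a ∈ 𝒜 n → j a ∈ ℬ n)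
    (hfree : Function.Bijective fun c : Finset (Fin s) → A =>
      ∑ I : Finset (Fin s), orderedProd ι I * j (c I))
    (φ : A →ₐ[ℚ] B) (hφdeg : ∀ (n : ℤ) (a : A), a ∈ 𝒜 n → φ a ∈ ℬ n)
    (e : B →ₐ[ℚ] A)
    (hej : e.comp j = AlgHom.id ℚ A)
    (heφ : e.comp φ = AlgHom.id ℚ A) :
    ∀ u : A, φ u = j u := by
  have hbijι : Function.Bijective (Lmap j ι) := hfree
  exact coreMain 𝒜 ℬ (xmod 𝒜 ι j e) j φ e hcA hcB hno
    (xmod_bij 𝒜 ℬ ι j e hbijι hcB hι hj)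
    hej heφ hj (xmod_mem 𝒜 ℬ ι j e hι hj) hφdeg (xmod_norm 𝒜 ι j e hej)
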